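/- For t > 0, define f(t) = (1/√π) ∫_{−∞}^{∞} exp(−x²·φ(x·t)) dx, where φ(z) = 2(e^z − 1 − z)/z², φ(0) = 1. Then lim_{t→0⁺} f(t) = 1. -/

import Mathlib

open Real Filter MeasureTheory Set

noncomputable def φ (z : ℝ) : ℝ :=
  if z = 0 then 1 else 2 * (Real.exp z - 1 - z) / z ^ 2

noncomputable def f (t : ℝ) : ℝ :=
  (Real.sqrt Real.pi)⁻¹ * ∫ x : ℝ, Real.exp (-(x ^ 2 * φ (x * t)))

lemma exp_lower_neg {z : ℝ} (hz : z ≤ 0) :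
    z ^ 2 / (2 * (1 - z)) ≤ Real.exp z - 1 - z := by
  set g : ℝ → ℝ := fun z => (1 - z) * (Real.exp z - 1 - z) - z ^ 2 / 2 with hg
  have hderiv : ∀ z : ℝ, HasDerivAt g (z * (1 - Real.exp z)) z := by
    intro z
    have h1 : HasDerivAt (fun z : ℝ => 1 - z) (-1) z := by
      simpa using (hasDerivAt_id z).const_sub 1
    have h2 : HasDerivAt (fun z : ℝ => Real.exp z - 1 - z) (Real.exp z - 1) z := by
      exact ((Real.hasDerivAt_exp z).sub_const 1).sub (hasDerivAt_id' z)
    have h4 : HasDerivAt (fun z : ℝ => z ^ 2 / 2) (2 * z ^ 1 / 2) z :=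
      (hasDerivAt_pow 2 z).div_const 2
    have h5 := (h1.mul h2).sub h4
    exact h5.congr_deriv (by ring)
  have hant : AntitoneOn g (Iic 0) := by
    apply antitoneOn_of_deriv_nonpos (convex_Iic 0)
    · exact (fun z _ => ((hderiv z).differentiableAt).continuousAt.continuousWithinAt)
    · exact fun z _ => ((hderiv z).differentiableAt).differentiableWithinAt
    · intro z hz
      rw [interior_Iic] at hz
      rw [(hderiv z).deriv]
      have hz' : z < 0 := hz
      have h1 : Real.exp z < 1 := Real.exp_lt_one_iff.mpr hz'
      nlinarith [mul_pos (neg_pos.mpr hz') (sub_pos.mpr h1)]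
  have hgz : g 0 ≤ g z := hant (mem_Iic.mpr hz) (mem_Iic.mpr le_rfl) hz
  have hg0 : g 0 = 0 := by simp [hg]
  rw [hg0] at hgz
  have h1z : (0:ℝ) < 1 - z := by linarith
  rw [div_le_iff₀ (by positivity)]
  simp only [hg] at hgz
  nlinarith

lemma key_ineq {x t : ℝ} (ht : 0 < t) (ht1 : t ≤ 1) :
    |x| - 1 ≤ x ^ 2 * φ (x * t) := by
  rcases eq_or_ne x 0 with rfl | hx
  · simp
  have hz : x * t ≠ 0 := mul_ne_zero hx ht.ne'
  rw [φ, if_neg hz]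
  have ht2 : (0:ℝ) < t ^ 2 := by positivity
  have hx2 : x ^ 2 * (2 * (Real.exp (x * t) - 1 - x * t) / (x * t) ^ 2)
      = 2 * (Real.exp (x * t) - 1 - x * t) / t ^ 2 := by
    field_simp
  rw [hx2]
  rcases hx.lt_or_gt with hneg | hpos
  · have hz0 : x * t ≤ 0 := by nlinarith
    have hE := exp_lower_neg hz0
    have h1z : (0:ℝ) < 1 - x * t := by nlinarith
    have hE' : (x * t) ^ 2 ≤ (Real.exp (x * t) - 1 - x * t) * (2 * (1 - x * t)) := by
      rw [div_le_iff₀ (by positivity)] at hE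
      linarith
    have hE0 : 0 ≤ Real.exp (x * t) - 1 - x * t := by
      nlinarith [Real.add_one_le_exp (x * t)]
    rw [abs_of_neg hneg, sub_le_iff_le_add, div_add' _ _ _ ht2.ne', le_div_iff₀ ht2,
        ← sub_nonneg]
    rcases le_or_gt (-x - 1) 0 with hc | hc
    · nlinarith
    · -- (-x-1)*(1-x*t) ≤ x^2 - 1 ... chain
      have h1 : (1 - x * t) ≤ 1 - x := by nlinarith
      have h2 : (-x - 1) * (1 - x * t) ≤ (-x - 1) * (1 - x) := by nlinarith
      have h3 : (-x - 1) * (1 - x) ≤ x ^ 2 := by nlinarith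
      -- so (-x-1) * t^2 * (1-x*t) ≤ x^2 * t^2 = (x*t)^2 ≤ 2E(1-x*t)
      have h4 : (-x - 1) * t ^ 2 * (1 - x * t) ≤ (x * t) ^ 2 := by nlinarith
      nlinarith
  · have hz0 : (0:ℝ) ≤ x * t := by positivity
    have hq := Real.quadratic_le_exp_of_nonneg hz0
    rw [abs_of_pos hpos, sub_le_iff_le_add, div_add' _ _ _ ht2.ne', le_div_iff₀ ht2]
    nlinarith [sq_nonneg (x - 1), sq_nonneg t, sq_nonneg (x*t)]

lemma phi_tendsto : Tendsto φ (nhds 0) (nhds 1) := by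
  have hb : ∀ z : ℝ, |z| ≤ 1 → ‖φ z - 1‖ ≤ 4 / 9 * |z| := by
    intro z hz1
    rcases eq_or_ne z 0 with rfl | hz
    · simp [φ]
    have hbd := Real.exp_bound hz1 (by norm_num : 0 < 3)
    have hsum : ∑ i ∈ Finset.range 3, z ^ i / (Nat.factorial i : ℝ)
        = 1 + z + z ^ 2 / 2 := by
      simp [Finset.sum_range_succ, Nat.factorial]
    rw [hsum] at hbd
    norm_num [Nat.factorial] at hbd
    have hz2 : (0:ℝ) < z ^ 2 := by positivity
    have : φ z - 1 = 2 * (Real.exp z - 1 - z - z ^ 2 / 2) / z ^ 2 := by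
      rw [φ, if_neg hz]
      field_simp
    rw [this, Real.norm_eq_abs, abs_div, abs_of_pos hz2]
    rw [div_le_iff₀ hz2]
    have habs : |2 * (Real.exp z - 1 - z - z ^ 2 / 2)| ≤ 2 * (|z| ^ 3 * (2 / 9)) := by
      rw [abs_mul, abs_two]
      have heq : Real.exp z - 1 - z - z ^ 2 / 2 = Real.exp z - (1 + z + z ^ 2 / 2) := by
        ring
      rw [heq]
      linarith
    have : |z| ^ 3 = |z| * z ^ 2 := by
      rw [← sq_abs]; ring
    nlinarith
  have hev : ∀ᶠ z in nhds (0:ℝ), ‖φ z - 1‖ ≤ 4 / 9 * |z| := by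
    filter_upwards [Metric.ball_mem_nhds (0:ℝ) one_pos] with z hz
    have hzb : |z| < 1 := by
      have := Metric.mem_ball.mp hz
      rwa [Real.dist_0_eq_abs] at this
    exact hb z hzb.le
  have hgt : Tendsto (fun z : ℝ => 4 / 9 * |z|) (nhds 0) (nhds 0) := by
    have : Tendsto (fun z : ℝ => 4 / 9 * |z|) (nhds 0) (nhds (4 / 9 * |(0:ℝ)|)) :=
      (continuous_const.mul continuous_abs).tendsto 0
    simpa using this
  have h0 : Tendsto (fun z : ℝ => φ z - 1) (nhds 0) (nhds 0) :=
    squeeze_zero_norm' hev hgt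
  have := h0.add tendsto_const_nhds (f := fun z : ℝ => φ z - 1) (b := (1:ℝ))
  simpa using this

lemma phi_measurable : Measurable φ := by
  unfold φ
  apply Measurable.ite (measurableSet_eq)
  · exact measurable_const
  · fun_prop

theorem f_tendsto_one :
    Filter.Tendsto f (nhdsWithin 0 (Set.Ioi 0)) (nhds 1) := by
  have hbound_int : Integrable (fun x : ℝ => Real.exp (1 - |x|)) := by
    rw [← integrableOn_univ, ← Set.Iic_union_Ioi (a := (0:ℝ))]
    apply IntegrableOn.union
    · have h1 : IntegrableOn (fun x : ℝ => Real.exp 1 * Real.exp x) (Iic 0) :=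
        (integrableOn_exp_Iic 0).const_mul _
      apply h1.congr_fun ?_ measurableSet_Iic
      intro x hx
      show Real.exp 1 * Real.exp x = Real.exp (1 - |x|)
      rw [abs_of_nonpos (mem_Iic.mp hx), ← Real.exp_add]
      ring_nf
    · have h1 : IntegrableOn (fun x : ℝ => Real.exp 1 * Real.exp (-1 * x)) (Ioi 0) :=
        (exp_neg_integrableOn_Ioi 0 one_pos).const_mul _
      apply h1.congr_fun ?_ measurableSet_Ioi
      intro x hx
      show Real.exp 1 * Real.exp (-1 * x) = Real.exp (1 - |x|)
      rw [abs_of_pos (mem_Ioi.mp hx), ← Real.exp_add]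
      ring_nf
  have hmain : Tendsto (fun t : ℝ => ∫ x : ℝ, Real.exp (-(x ^ 2 * φ (x * t))))
      (nhdsWithin 0 (Set.Ioi 0)) (nhds (∫ x : ℝ, Real.exp (-x ^ 2))) := by
    apply MeasureTheory.tendsto_integral_filter_of_dominated_convergence
      (bound := fun x : ℝ => Real.exp (1 - |x|))
    · filter_upwards with t
      apply Measurable.aestronglyMeasurable
      apply Real.measurable_exp.comp
      apply Measurable.neg
      exact (measurable_id.pow_const 2).mul
        (phi_measurable.comp (measurable_id.mul_const t))
    · have hIoc : Ioc (0:ℝ) 1 ∈ nhdsWithin 0 (Set.Ioi 0) :=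
        Ioc_mem_nhdsGT_of_mem (by simp : (0:ℝ) ∈ Ico (0:ℝ) 1)
      filter_upwards [hIoc] with t ht
      filter_upwards with x
      rw [Real.norm_eq_abs, abs_of_pos (Real.exp_pos _), Real.exp_le_exp]
      have := key_ineq (x := x) ht.1 ht.2
      linarith
    · exact hbound_int
    · filter_upwards with x
      have hxt : Tendsto (fun t : ℝ => x * t) (nhdsWithin 0 (Set.Ioi 0)) (nhds 0) := by
        have : Tendsto (fun t : ℝ => x * t) (nhds 0) (nhds (x * 0)) :=
          (continuous_const.mul continuous_id).tendsto 0
        simpa using this.mono_left nhdsWithin_le_nhds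
      have hphi : Tendsto (fun t : ℝ => φ (x * t)) (nhdsWithin 0 (Set.Ioi 0)) (nhds 1) :=
        phi_tendsto.comp hxt
      have : Tendsto (fun t : ℝ => Real.exp (-(x ^ 2 * φ (x * t))))
          (nhdsWithin 0 (Set.Ioi 0)) (nhds (Real.exp (-(x ^ 2 * 1)))) :=
        (Real.continuous_exp.tendsto _).comp ((hphi.const_mul (x ^ 2)).neg)
      simpa using this
  have hgauss : (∫ x : ℝ, Real.exp (-x ^ 2)) = Real.sqrt Real.pi := by
    have := integral_gaussian (1 : ℝ)
    simpa using this
  rw [hgauss] at hmain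
  have hfinal := hmain.const_mul ((Real.sqrt Real.pi)⁻¹)
  have hne : Real.sqrt Real.pi ≠ 0 := by
    positivity
  rw [inv_mul_cancel₀ hne] at hfinal
  exact hfinal
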